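/- Let d ≥ 1 and J ≥ 1, let x_1, …, x_J ∈ ℝ^d, Θ = {θ ∈ ℝ^d : x_j^⊤θ ≥ 0 for all j ∈ [J]}, ρ ≥ 0, μ̂ ∈ ℝ^d, and Σ̂ ∈ ℝ^{d×d} symmetric positive definite. If μ̂ ∉ Θ, then the worst-case lower bound on the probability of validity is trivial: inf_{Q ∈ 𝔹} Q(θ̃ ∈ Θ) = 0, where 𝔹 is the set of Borel probability measures Q on ℝ^d whose mean vector μ and covariance matrix Σ exist and satisfy 𝔾((μ, Σ), (μ̂, Σ̂)) ≤ ρ. Consequently, the semidefinite-programming lower bound L⋆ of Theorem 1 (which is dominated by this infimum) equals 0. -/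

import Mathlib

open MeasureTheory Matrix Classical

noncomputable section

/-- Positive semidefinite square root of a matrix (junk value `0` if not PSD). -/
noncomputable def matSqrt {d : ℕ} (A : Matrix (Fin d) (Fin d) ℝ) : Matrix (Fin d) (Fin d) ℝ :=
  if h : A.PosSemidef then
    (h.1.eigenvectorUnitary : Matrix (Fin d) (Fin d) ℝ) *
      diagonal ((↑) ∘ (√·) ∘ h.1.eigenvalues) *
      (star h.1.eigenvectorUnitary : Matrix (Fin d) (Fin d) ℝ)
  else 0

/-- Euclidean norm on `Fin d → ℝ`. -/
noncomputable def euclNorm {d : ℕ} (v : Fin d → ℝ) : ℝ := Real.sqrt (∑ i, (v i) ^ 2)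

/-- Gelbrich distance between two mean–covariance pairs. -/
noncomputable def gelbrich {d : ℕ} (μ₁ : Fin d → ℝ) (S₁ : Matrix (Fin d) (Fin d) ℝ)
    (μ₂ : Fin d → ℝ) (S₂ : Matrix (Fin d) (Fin d) ℝ) : ℝ :=
  Real.sqrt ((∑ i, (μ₁ i - μ₂ i) ^ 2) +
    (S₁ + S₂ - (2 : ℝ) • matSqrt (matSqrt S₂ * S₁ * matSqrt S₂)).trace)

/-- The symmetric block matrix `[[Z, z], [zᵀ, c]]`. -/
def blk {d : ℕ} (Z : Matrix (Fin d) (Fin d) ℝ) (z : Fin d → ℝ) (c : ℝ) :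
    Matrix (Fin d ⊕ Unit) (Fin d ⊕ Unit) ℝ :=
  Matrix.of fun p q =>
    match p, q with
    | Sum.inl i, Sum.inl j => Z i j
    | Sum.inl i, Sum.inr _ => z i
    | Sum.inr _, Sum.inl j => z j
    | Sum.inr _, Sum.inr _ => c

/-- The block matrix `[[A, B], [C, D]]` with four `d × d` blocks. -/
def blk2 {d : ℕ} (A B C D : Matrix (Fin d) (Fin d) ℝ) :
    Matrix (Fin d ⊕ Fin d) (Fin d ⊕ Fin d) ℝ :=
  Matrix.fromBlocks A B C D

/-- Set of favorable parameters `Θ({x_j}) = {θ : x_jᵀθ ≥ 0 ∀ j}`. -/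
def favSet {d J : ℕ} (x : Fin J → Fin d → ℝ) : Set (Fin d → ℝ) :=
  { θ | ∀ j, 0 ≤ x j ⬝ᵥ θ }

/-- `Q` has mean vector `μ`: every coordinate is integrable with the prescribed integral. -/
def hasMean {d : ℕ} (Q : Measure (Fin d → ℝ)) (μ : Fin d → ℝ) : Prop :=
  ∀ i, Integrable (fun θ => θ i) Q ∧ ∫ θ, θ i ∂Q = μ i

/-- `Q` has covariance matrix `S` around the mean `μ`. -/
def hasCov {d : ℕ} (Q : Measure (Fin d → ℝ)) (μ : Fin d → ℝ)
    (S : Matrix (Fin d) (Fin d) ℝ) : Prop :=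
  ∀ i j, Integrable (fun θ => (θ i - μ i) * (θ j - μ j)) Q ∧
    ∫ θ, (θ i - μ i) * (θ j - μ j) ∂Q = S i j

/-- Membership in the ambiguity set `𝔹`: `Q` is a Borel probability measure whose mean
vector `μ` and covariance matrix `S` exist and satisfy `𝔾((μ, S), (μ̂, Σ̂)) ≤ ρ`. -/
def inAmbiguity {d : ℕ} (μhat : Fin d → ℝ) (Shat : Matrix (Fin d) (Fin d) ℝ) (ρ : ℝ)
    (Q : Measure (Fin d → ℝ)) : Prop :=
  IsProbabilityMeasure Q ∧
    ∃ (μ : Fin d → ℝ) (S : Matrix (Fin d) (Fin d) ℝ),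
      S.PosSemidef ∧ hasMean Q μ ∧ hasCov Q μ S ∧ gelbrich μ S μhat Shat ≤ ρ

/-- Feasibility for the lower-bound semidefinite program of Theorem 1. -/
def LFeas {d J : ℕ} (x : Fin J → Fin d → ℝ) (μhat : Fin d → ℝ)
    (Shat : Matrix (Fin d) (Fin d) ℝ) (ρ : ℝ)
    (μ : Fin d → ℝ) (S C M : Matrix (Fin d) (Fin d) ℝ)
    (lam : Fin J → ℝ) (z : Fin J → Fin d → ℝ)
    (Z : Fin J → Matrix (Fin d) (Fin d) ℝ) : Prop :=
  S.PosSemidef ∧ M.PosSemidef ∧ (∀ j, (Z j).IsSymm) ∧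
  (∀ j, 0 ≤ -(x j ⬝ᵥ z j) ∧ (blk (Z j) (z j) (lam j)).PosSemidef) ∧
  (blk M μ 1 - ∑ j, blk (Z j) (z j) (lam j)).PosSemidef ∧
  (blk2 S C Cᵀ Shat).PosSemidef ∧
  (blk (M - S) μ 1).PosSemidef ∧
  (∑ i, (μhat i) ^ 2) - 2 * (μhat ⬝ᵥ μ) + (M + Shat - (2 : ℝ) • C).trace ≤ ρ ^ 2

/-- Optimal value `L⋆` of the lower-bound semidefinite program of Theorem 1. -/
noncomputable def Lstar {d J : ℕ} (x : Fin J → Fin d → ℝ) (μhat : Fin d → ℝ)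
    (Shat : Matrix (Fin d) (Fin d) ℝ) (ρ : ℝ) : ℝ :=
  sInf { v | ∃ (μ : Fin d → ℝ) (S C M : Matrix (Fin d) (Fin d) ℝ)
      (lam : Fin J → ℝ) (z : Fin J → Fin d → ℝ) (Z : Fin J → Matrix (Fin d) (Fin d) ℝ),
      LFeas x μhat Shat ρ μ S C M lam z Z ∧ v = 1 - ∑ j, lam j }

/- ===== auxiliary lemmas ===== -/
section Helpers

variable {d : ℕ}

lemma matSqrt_eq_cfc {d : ℕ} {A : Matrix (Fin d) (Fin d) ℝ} (h : A.PosSemidef) :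
    matSqrt A = cfc Real.sqrt A := by
  rw [matSqrt, dif_pos h, h.1.cfc_eq, IsHermitian.cfc, Unitary.conjStarAlgAut_apply]
  rfl
lemma matSqrt_spec_nonneg {d : ℕ} {A : Matrix (Fin d) (Fin d) ℝ} (h : A.PosSemidef) :
    ∀ x ∈ spectrum ℝ A, 0 ≤ x := by
  rw [h.1.spectrum_real_eq_range_eigenvalues]
  rintro _ ⟨i, rfl⟩
  exact h.eigenvalues_nonneg i
lemma matSqrt_mul_self {d : ℕ} {A : Matrix (Fin d) (Fin d) ℝ} (h : A.PosSemidef) :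
    matSqrt A * matSqrt A = A := by
  rw [matSqrt_eq_cfc h, ← cfc_mul Real.sqrt Real.sqrt A]
  conv_rhs => rw [← cfc_id' ℝ A (ha := h.1.isSelfAdjoint)]
  exact cfc_congr fun x hx => Real.mul_self_sqrt (matSqrt_spec_nonneg h x hx)
lemma matSqrt_isHermitian {d : ℕ} {A : Matrix (Fin d) (Fin d) ℝ} (h : A.PosSemidef) :
    (matSqrt A).IsHermitian := by
  rw [matSqrt_eq_cfc h]
  exact cfc_predicate Real.sqrt A
lemma matSqrt_sq {d : ℕ} {A : Matrix (Fin d) (Fin d) ℝ} (h : A.PosSemidef) :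
    matSqrt (A * A) = A := by
  have hAA : (A * A).PosSemidef := by
    have := h.pow 2
    rwa [pow_two] at this
  have hsa : IsSelfAdjoint A := h.1.isSelfAdjoint
  rw [matSqrt_eq_cfc hAA]
  have e : A * A = cfc (fun x : ℝ => x * x) A := by
    rw [cfc_mul (fun x : ℝ => x) (fun x : ℝ => x) A, cfc_id' ℝ A]
  rw [e, ← cfc_comp Real.sqrt (fun x : ℝ => x * x) A]
  conv_rhs => rw [← cfc_id' ℝ A (ha := hsa)]
  exact cfc_congr fun x hx => Real.sqrt_mul_self (matSqrt_spec_nonneg h x hx)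

lemma measurable_dot {J : ℕ} (x : Fin J → Fin d → ℝ) (j : Fin J) :
    Measurable fun θ : Fin d → ℝ => x j ⬝ᵥ θ := by
  simp only [dotProduct]
  exact Finset.measurable_sum _ fun i _ => ((measurable_pi_apply i).const_mul _)

lemma measurableSet_favSet {J : ℕ} (x : Fin J → Fin d → ℝ) : MeasurableSet (favSet x) := by
  have : favSet x = ⋂ j, {θ : Fin d → ℝ | 0 ≤ x j ⬝ᵥ θ} := by
    ext θ; simp [favSet]
  rw [this]
  exact MeasurableSet.iInter fun j => measurableSet_le measurable_const (measurable_dot x j)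

noncomputable def disc {ι : Type} [Fintype ι] (ww : ι → ℝ) (pt : ι → (Fin d → ℝ)) :
    Measure (Fin d → ℝ) :=
  ∑ k, (ENNReal.ofReal (ww k)) • Measure.dirac (pt k)

lemma disc_apply {ι : Type} [Fintype ι] (ww : ι → ℝ) (pt : ι → (Fin d → ℝ))
    {S : Set (Fin d → ℝ)} (hS : MeasurableSet S) :
    disc ww pt S = ∑ k, ENNReal.ofReal (ww k) * S.indicator 1 (pt k) := by
  rw [disc, Measure.finset_sum_apply]
  simp [Measure.smul_apply, Measure.dirac_apply' _ hS, smul_eq_mul]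

lemma integrable_disc {ι : Type} [Fintype ι] (ww : ι → ℝ) (pt : ι → (Fin d → ℝ))
    (f : (Fin d → ℝ) → ℝ) : Integrable f (disc ww pt) := by
  refine integrable_finset_sum_measure.2 fun k _ => ?_
  refine ((integrable_const (f (pt k))).congr ?_).smul_measure ENNReal.ofReal_ne_top
  rw [Filter.EventuallyEq, ae_dirac_eq]
  simp

lemma integral_disc {ι : Type} [Fintype ι] {ww : ι → ℝ} (hw : ∀ k, 0 ≤ ww k)
    (pt : ι → (Fin d → ℝ)) (f : (Fin d → ℝ) → ℝ) :
    ∫ θ, f θ ∂(disc ww pt) = ∑ k, ww k * f (pt k) := by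
  rw [disc, integral_finset_sum_measure (fun k _ => by
    refine ((integrable_const (f (pt k))).congr ?_).smul_measure ENNReal.ofReal_ne_top
    rw [Filter.EventuallyEq, ae_dirac_eq]; simp)]
  refine Finset.sum_congr rfl fun k _ => ?_
  rw [integral_smul_measure, integral_dirac, ENNReal.toReal_ofReal (hw k), smul_eq_mul]

lemma disc_isProb {ι : Type} [Fintype ι] {ww : ι → ℝ} (hw : ∀ k, 0 ≤ ww k)
    (hsum : ∑ k, ww k = 1) (pt : ι → (Fin d → ℝ)) :
    IsProbabilityMeasure (disc ww pt) := by
  constructor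
  rw [disc_apply ww pt MeasurableSet.univ]
  simp only [Set.indicator_univ, Pi.one_apply, mul_one]
  rw [← ENNReal.ofReal_sum_of_nonneg (fun k _ => hw k), hsum, ENNReal.ofReal_one]

lemma disc_zero {ι : Type} [Fintype ι] (ww : ι → ℝ) (pt : ι → (Fin d → ℝ))
    {S : Set (Fin d → ℝ)} (hS : MeasurableSet S) (h : ∀ k, pt k ∉ S) :
    disc ww pt S = 0 := by
  rw [disc_apply ww pt hS]
  refine Finset.sum_eq_zero fun k _ => ?_
  rw [Set.indicator_of_notMem (h k), mul_zero]

@[simp] lemma blk_ll (Z : Matrix (Fin d) (Fin d) ℝ) (z : Fin d → ℝ) (c : ℝ) (i j : Fin d) :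
    blk Z z c (Sum.inl i) (Sum.inl j) = Z i j := rfl
@[simp] lemma blk_lr (Z : Matrix (Fin d) (Fin d) ℝ) (z : Fin d → ℝ) (c : ℝ) (i : Fin d) (u : Unit) :
    blk Z z c (Sum.inl i) (Sum.inr u) = z i := rfl
@[simp] lemma blk_rl (Z : Matrix (Fin d) (Fin d) ℝ) (z : Fin d → ℝ) (c : ℝ) (j : Fin d) (u : Unit) :
    blk Z z c (Sum.inr u) (Sum.inl j) = z j := rfl
@[simp] lemma blk_rr (Z : Matrix (Fin d) (Fin d) ℝ) (z : Fin d → ℝ) (c : ℝ) (u v : Unit) :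
    blk Z z c (Sum.inr u) (Sum.inr v) = c := rfl

lemma quad_blk (Z : Matrix (Fin d) (Fin d) ℝ) (z : Fin d → ℝ) (c : ℝ) (y : Fin d ⊕ Unit → ℝ) :
    y ⬝ᵥ (blk Z z c) *ᵥ y =
      (fun i => y (Sum.inl i)) ⬝ᵥ Z *ᵥ (fun i => y (Sum.inl i)) +
      2 * (z ⬝ᵥ (fun i => y (Sum.inl i))) * y (Sum.inr ()) +
      c * y (Sum.inr ()) ^ 2 := by
  simp only [dotProduct, mulVec, Fintype.sum_sum_type, Finset.univ_unique, Finset.sum_singleton,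
    blk_ll, blk_lr, blk_rl, blk_rr]
  have h2 : ∑ x, (y (Sum.inl x) * ∑ x1, Z x x1 * y (Sum.inl x1))
      = ∑ x, ∑ x1, y (Sum.inl x) * (Z x x1 * y (Sum.inl x1)) := by
    exact Finset.sum_congr rfl fun i _ => by rw [Finset.mul_sum]
  simp only [mul_add]
  rw [Finset.sum_add_distrib]
  have h1 : ∑ x, y (Sum.inl x) * (z x * y (Sum.inr default))
      = (∑ x, z x * y (Sum.inl x)) * y (Sum.inr default) := by
    rw [Finset.sum_mul]; exact Finset.sum_congr rfl fun i _ => by ring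
  rw [h1]
  have hd : (default : Unit) = () := rfl
  rw [hd]; ring

lemma posSemidef_mk {m : Type} [Fintype m] {A : Matrix m m ℝ} (hsym : Aᵀ = A)
    (h : ∀ y, 0 ≤ y ⬝ᵥ A *ᵥ y) : A.PosSemidef :=
  Matrix.PosSemidef.of_dotProduct_mulVec_nonneg
    (by rw [Matrix.IsHermitian, conjTranspose_eq_transpose_of_trivial]; exact hsym)
    (fun y => by simpa using h y)

lemma psd_quad {m : Type} [Fintype m] {A : Matrix m m ℝ} (hA : A.PosSemidef) (y : m → ℝ) :
    0 ≤ y ⬝ᵥ A *ᵥ y := by simpa using hA.dotProduct_mulVec_nonneg y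

lemma psd_diag {m : Type} [Fintype m] [DecidableEq m] {A : Matrix m m ℝ} (hA : A.PosSemidef)
    (i : m) : 0 ≤ A i i := by
  have := psd_quad hA (Pi.single i 1)
  simpa [dotProduct, mulVec, Pi.single_apply, Finset.sum_ite_eq', Finset.mul_sum] using this

lemma quad_vecMulVec (w y : Fin d → ℝ) : y ⬝ᵥ (vecMulVec w w) *ᵥ y = (w ⬝ᵥ y) ^ 2 := by
  have h : (vecMulVec w w) *ᵥ y = (w ⬝ᵥ y) • w := by
    ext i
    simp only [vecMulVec_apply, mulVec, dotProduct, Pi.smul_apply, smul_eq_mul, Finset.sum_mul]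
    exact Finset.sum_congr rfl fun j _ => by ring
  rw [h, dotProduct_smul, smul_eq_mul, dotProduct_comm]; ring

lemma psd_blk_rankone (w : Fin d → ℝ) : (blk (vecMulVec w w) w 1).PosSemidef := by
  refine posSemidef_mk ?_ ?_
  · ext p q
    cases p <;> cases q <;> simp [transpose_apply, vecMulVec_apply, mul_comm]
  · intro y
    rw [quad_blk, quad_vecMulVec]
    have : (w ⬝ᵥ fun i => y (Sum.inl i)) ^ 2 +
        2 * (w ⬝ᵥ fun i => y (Sum.inl i)) * y (Sum.inr ()) + 1 * y (Sum.inr ()) ^ 2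
        = ((w ⬝ᵥ fun i => y (Sum.inl i)) + y (Sum.inr ())) ^ 2 := by ring
    rw [this]
    exact sq_nonneg _

lemma psd_blk_corner {A : Matrix (Fin d) (Fin d) ℝ} (hA : A.PosSemidef) :
    (blk A 0 0).PosSemidef := by
  have hsym : Aᵀ = A := conjTranspose_eq_transpose_of_trivial A ▸ hA.1
  have he : ∀ i j, A j i = A i j := fun i j => congrFun (congrFun hsym i) j
  refine posSemidef_mk ?_ ?_
  · ext p q
    cases p <;> cases q <;> simp [transpose_apply, he]
  · intro y
    rw [quad_blk]
    simpa using psd_quad hA _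

lemma psd_blk2_ones {A : Matrix (Fin d) (Fin d) ℝ} (hA : A.PosSemidef) :
    (Matrix.fromBlocks A A A A).PosSemidef := by
  have hsym : Aᵀ = A := conjTranspose_eq_transpose_of_trivial A ▸ hA.1
  refine posSemidef_mk ?_ ?_
  · rw [fromBlocks_transpose, hsym]
  · intro y
    have hy : y = Sum.elim (fun i => y (Sum.inl i)) (fun i => y (Sum.inr i)) := by
      ext p; cases p <;> rfl
    rw [hy, fromBlocks_mulVec, sumElim_dotProduct_sumElim]
    simp only [Sum.elim_comp_inl, Sum.elim_comp_inr]
    have : ∀ y1 y2 : Fin d → ℝ, y1 ⬝ᵥ (A *ᵥ y1 + A *ᵥ y2) + y2 ⬝ᵥ (A *ᵥ y1 + A *ᵥ y2)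
        = (y1 + y2) ⬝ᵥ A *ᵥ (y1 + y2) := by
      intro y1 y2
      simp only [mulVec_add, dotProduct_add, add_dotProduct]
      abel
    rw [this]
    exact psd_quad hA _

lemma gelbrich_self (μ : Fin d → ℝ) {S : Matrix (Fin d) (Fin d) ℝ} (hS : S.PosDef) :
    gelbrich μ S μ S = 0 := by
  have hpsd : S.PosSemidef := hS.posSemidef
  have hB : matSqrt S = matSqrt S := rfl
  have hBB : matSqrt S * matSqrt S = S := matSqrt_mul_self hpsd
  have hSS : (matSqrt S * S * matSqrt S) = S * S := by
    obtain ⟨B, hBdef⟩ : ∃ B, matSqrt S = B := ⟨_, rfl⟩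
    rw [hBdef] at hBB ⊢
    rw [← hBB]
    noncomm_ring
  have hSSpsd : (S * S).PosSemidef := by
    have := hpsd.pow 2
    rwa [pow_two] at this
  have hms : matSqrt (matSqrt S * S * matSqrt S) = S := by
    rw [hSS]
    exact matSqrt_sq hpsd
  rw [gelbrich, hB, hms]
  simp only [sub_self, zero_pow, Finset.sum_const_zero, ne_eq, OfNat.ofNat_ne_zero,
    not_false_eq_true, zero_add]
  have htr : (S + S - (2:ℝ) • S).trace = 0 := by
    simp only [Matrix.trace, Matrix.diag_apply, Matrix.add_apply, Matrix.sub_apply,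
      Matrix.smul_apply, smul_eq_mul, Finset.sum_sub_distrib]
    rw [sub_eq_zero]
    exact Finset.sum_congr rfl fun i _ => by ring
  rw [htr, Real.sqrt_zero]

lemma exists_good_measure {d J : ℕ} (hd : 1 ≤ d) (x : Fin J → Fin d → ℝ) {ρ : ℝ} (hρ : 0 ≤ ρ)
    (μhat : Fin d → ℝ) (Shat : Matrix (Fin d) (Fin d) ℝ) (hShat : Shat.PosDef)
    {j₀ : Fin J} (hj : x j₀ ⬝ᵥ μhat < 0) :
    ∃ Q : Measure (Fin d → ℝ), inAmbiguity μhat Shat ρ Q ∧ Q (favSet x) = 0 := by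
  classical
  set u : Fin d → ℝ := x j₀ with hu
  have ha : u ⬝ᵥ μhat < 0 := hj
  set a : ℝ := u ⬝ᵥ μhat with hadef
  have hune : u ≠ 0 := by
    intro h
    rw [hadef, h, zero_dotProduct] at ha
    exact lt_irrefl 0 ha
  have hpsd : Shat.PosSemidef := hShat.posSemidef
  set B : Matrix (Fin d) (Fin d) ℝ := matSqrt Shat with hBdef
  have hBB : B * B = Shat := matSqrt_mul_self hpsd
  have hBsym : ∀ i j, B i j = B j i := by
    have h1 : Bᵀ = B := conjTranspose_eq_transpose_of_trivial B ▸ matSqrt_isHermitian hpsd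
    intro i j
    have h2 := congrFun (congrFun h1 j) i
    rwa [transpose_apply] at h2
  set G : Fin d → ℝ := Shat *ᵥ u with hG
  set N : ℝ := u ⬝ᵥ G with hN
  have hNpos : 0 < N := by
    have := hShat.dotProduct_mulVec_pos hune
    simpa [hN, hG] using this
  have hNne : N ≠ 0 := ne_of_gt hNpos
  set v : Fin d → ℝ := B *ᵥ u with hv
  have hBv : B *ᵥ v = G := by rw [hv, mulVec_mulVec, hBB]
  have symdot : ∀ p q : Fin d → ℝ, p ⬝ᵥ (B *ᵥ q) = (B *ᵥ p) ⬝ᵥ q := by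
    intro p q
    simp only [dotProduct, mulVec, Finset.mul_sum, Finset.sum_mul]
    rw [Finset.sum_comm]
    exact Finset.sum_congr rfl fun i _ => Finset.sum_congr rfl fun j _ => by
      rw [hBsym j i]; ring
  have hvv : v ⬝ᵥ v = N := by
    calc v ⬝ᵥ v = (B *ᵥ u) ⬝ᵥ v := by rw [← hv]
    _ = u ⬝ᵥ (B *ᵥ v) := (symdot u v).symm
    _ = u ⬝ᵥ G := by rw [hBv]
  set n : ℝ := Real.sqrt N with hndef
  have hn : 0 < n := Real.sqrt_pos.2 hNpos
  have hnne : n ≠ 0 := ne_of_gt hn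
  have hn2 : n * n = N := Real.mul_self_sqrt hNpos.le
  set g0 : Fin d → ℝ := fun i => G i / n with hg0
  set g : Fin d → Fin d → ℝ := fun i j' => B j' i - v i * G j' / N with hg
  -- dot products with u
  have hug0 : u ⬝ᵥ g0 = n := by
    rw [hg0]
    simp only [dotProduct]
    rw [show ∑ i, u i * (G i / n) = (∑ i, u i * G i) / n by
      rw [Finset.sum_div]; exact Finset.sum_congr rfl fun i _ => by ring]
    rw [show (∑ i, u i * G i) = N from (hN ▸ rfl)]
    rw [← hn2]
    field_simp
  have huB : ∀ i, ∑ j, u j * B j i = v i := by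
    intro i
    rw [hv]
    simp only [mulVec, dotProduct]
    exact Finset.sum_congr rfl fun j _ => by rw [hBsym j i]; ring
  have hug : ∀ i, u ⬝ᵥ g i = 0 := by
    intro i
    simp only [hg, dotProduct, mul_sub]
    rw [Finset.sum_sub_distrib]
    rw [huB i]
    rw [show ∑ j, u j * (v i * G j / N) = v i / N * ∑ j, u j * G j by
      rw [Finset.mul_sum]; exact Finset.sum_congr rfl fun j _ => by ring]
    rw [show (∑ j, u j * G j) = N from (hN ▸ rfl)]
    field_simp
    ring
  -- covariance identity
  have hBvr : ∀ r, ∑ i, B r i * v i = G r := by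
    intro r
    rw [← hBv]
    simp only [mulVec, dotProduct]
  have hBBr : ∀ r c, ∑ i, B r i * B c i = Shat r c := by
    intro r c
    have := congrFun (congrFun hBB r) c
    simp only [Matrix.mul_apply] at this
    rw [← this]
    exact Finset.sum_congr rfl fun i _ => by rw [hBsym c i]
  have hvvsum : ∑ i, v i * v i = N := by
    rw [← hvv]; simp only [dotProduct]
  have hcov : ∀ r c, g0 r * g0 c + (∑ i, g i r * g i c) = Shat r c := by
    intro r c
    have expand : ∀ i, g i r * g i c = B r i * B c i - (G r / N) * (B c i * v i)
        - (G c / N) * (B r i * v i) + (G r * G c / (N * N)) * (v i * v i) := by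
      intro i; simp only [hg]; field_simp; ring
    rw [Finset.sum_congr rfl (fun i _ => expand i)]
    simp only [Finset.sum_add_distrib, Finset.sum_sub_distrib, ← Finset.mul_sum]
    rw [hBBr r c, hBvr r, hBvr c, hvvsum]
    have hg00 : g0 r * g0 c = G r * G c / N := by
      simp only [hg0]
      rw [div_mul_div_comm, hn2]
    rw [hg00]
    field_simp
    ring
  -- scalars
  set s : ℝ := -a / (2 * n) with hsdef
  have hs : 0 < s := by
    apply div_pos (by linarith) (by linarith)
  have hsne : s ≠ 0 := ne_of_gt hs
  set t : ℝ := 2 / s with htdef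
  have ht : 0 < t := by positivity
  have hst : s * t = 2 := by rw [htdef]; field_simp
  have hstpos : 0 < s + t := by linarith
  have hstne : s + t ≠ 0 := ne_of_gt hstpos
  set m1 : ℝ := t / (2 * (s + t)) with hm1
  set m2 : ℝ := s / (2 * (s + t)) with hm2
  have hm1pos : 0 ≤ m1 := by positivity
  have hm2pos : 0 ≤ m2 := by positivity
  have h12 : m1 + m2 = 1 / 2 := by
    rw [hm1, hm2, ← add_div]
    rw [show t + s = s + t by ring]
    field_simp
  have hms : m1 * s = m2 * t := by rw [hm1, hm2]; field_simp
  have hvar : m1 * s ^ 2 + m2 * t ^ 2 = 1 := by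
    have h1 : m1 * s ^ 2 + m2 * t ^ 2 = s * t / 2 := by
      rw [hm1, hm2]; field_simp
    rw [h1, hst]; norm_num
  have hdpos : (0 : ℝ) < d := by exact_mod_cast hd
  have hdne : (d : ℝ) ≠ 0 := ne_of_gt hdpos
  set c : ℝ := Real.sqrt (2 * d) with hcdef
  have hc2 : c * c = 2 * d := Real.mul_self_sqrt (by positivity)
  clear_value B G N v n s t m1 m2 c
  -- the measure
  set ww : Bool ⊕ (Fin d × Bool) → ℝ :=
    Sum.elim (fun b => if b then m1 else m2) (fun _ => 1 / (4 * d)) with hww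
  set pt : Bool ⊕ (Fin d × Bool) → Fin d → ℝ :=
    Sum.elim (fun b => if b then (fun i => μhat i + s * g0 i) else (fun i => μhat i + (-t) * g0 i))
      (fun p => fun i => μhat i + (if p.2 then c else -c) * g p.1 i) with hpt
  have hwpos : ∀ k, 0 ≤ ww k := by
    intro k
    rcases k with b | p
    · rcases b <;> simp [hww, hm1pos, hm2pos]
    · simp only [hww, Sum.elim_inr]
      positivity
  clear_value ww pt
  have hwsum : ∑ k, ww k = 1 := by
    rw [Fintype.sum_sum_type]
    simp only [hww, Sum.elim_inl, Sum.elim_inr, Fintype.sum_bool, if_true, Bool.false_eq_true, if_false]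
    rw [Finset.sum_const]
    simp only [Finset.card_univ, Fintype.card_prod, Fintype.card_fin, Fintype.card_bool,
      nsmul_eq_mul, Nat.cast_mul, Nat.cast_ofNat]
    rw [h12]
    field_simp
    ring
  refine ⟨disc ww pt, ⟨disc_isProb hwpos hwsum pt, μhat, Shat, hpsd, ?_, ?_, ?_⟩, ?_⟩
  · -- mean
    intro i
    refine ⟨integrable_disc ww pt _, ?_⟩
    rw [integral_disc hwpos pt _]
    rw [Fintype.sum_sum_type]
    simp only [hww, hpt, Sum.elim_inl, Sum.elim_inr, Fintype.sum_bool, if_true, Bool.false_eq_true, if_false]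
    rw [Fintype.sum_prod_type]
    have inner : ∀ j : Fin d, ∑ b : Bool,
        1 / (4 * (d:ℝ)) * (μhat i + (if b then c else -c) * g j i) = μhat i / (2 * d) := by
      intro j
      rw [Fintype.sum_bool]
      simp only [if_true, Bool.false_eq_true, if_false]
      field_simp
      ring
    rw [Finset.sum_congr rfl (fun j _ => inner j), Finset.sum_const]
    simp only [Finset.card_univ, Fintype.card_fin, nsmul_eq_mul]
    have hdiv : (d : ℝ) * (μhat i / (2 * d)) = μhat i / 2 := by field_simp
    rw [hdiv]
    linear_combination (μhat i) * h12 + (g0 i) * hms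
  · -- covariance
    intro r c'
    refine ⟨integrable_disc ww pt _, ?_⟩
    rw [integral_disc hwpos pt _]
    rw [Fintype.sum_sum_type]
    simp only [hww, hpt, Sum.elim_inl, Sum.elim_inr, Fintype.sum_bool, if_true, Bool.false_eq_true, if_false]
    rw [Fintype.sum_prod_type]
    have inner : ∀ j : Fin d, ∑ b : Bool,
        1 / (4 * (d:ℝ)) * ((μhat r + (if b then c else -c) * g j r - μhat r) *
          (μhat c' + (if b then c else -c) * g j c' - μhat c')) = g j r * g j c' := by
      intro j
      rw [Fintype.sum_bool]
      simp only [if_true, Bool.false_eq_true, if_false]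
      have : 1 / (4 * (d:ℝ)) * ((μhat r + c * g j r - μhat r) * (μhat c' + c * g j c' - μhat c'))
          + 1 / (4 * (d:ℝ)) * ((μhat r + (-c) * g j r - μhat r) * (μhat c' + (-c) * g j c' - μhat c'))
          = (c * c) * (g j r * g j c') / (2 * d) := by ring
      rw [this, hc2]
      field_simp
    rw [Finset.sum_congr rfl (fun j _ => inner j)]
    have key := hcov r c'
    have lhs12 : m1 * ((μhat r + s * g0 r - μhat r) * (μhat c' + s * g0 c' - μhat c'))
        + m2 * ((μhat r + (-t) * g0 r - μhat r) * (μhat c' + (-t) * g0 c' - μhat c'))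
        = (m1 * s ^ 2 + m2 * t ^ 2) * (g0 r * g0 c') := by ring
    rw [lhs12, hvar, one_mul]
    linarith [key]
  · -- gelbrich
    rw [gelbrich_self μhat hShat]
    exact hρ
  · -- zero mass
    refine disc_zero ww pt (measurableSet_favSet x) ?_
    intro k hk
    have hk0 : 0 ≤ u ⬝ᵥ pt k := hk j₀
    have hdotshift : ∀ (coef : ℝ) (gv : Fin d → ℝ),
        (u ⬝ᵥ fun i => μhat i + coef * gv i) = a + coef * (u ⬝ᵥ gv) := by
      intro coef gv
      simp only [dotProduct, mul_add, Finset.sum_add_distrib]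
      rw [Finset.mul_sum]
      rw [hadef]
      simp only [dotProduct]
      congr 1
      exact Finset.sum_congr rfl fun i _ => by ring
    rcases k with b | p
    · rcases b with _ | _
      · -- b = false : coefficient -t
        simp only [hpt, Sum.elim_inl, if_false, Bool.false_eq_true] at hk0
        rw [hdotshift (-t) g0, hug0] at hk0
        have htn : 0 < t * n := mul_pos ht hn
        linarith
      · simp only [hpt, Sum.elim_inl, if_true] at hk0
        rw [hdotshift s g0, hug0] at hk0
        have hsn : s * n = -a / 2 := by
          rw [hsdef]; field_simp
        rw [hsn] at hk0
        linarith
    · simp only [hpt, Sum.elim_inr] at hk0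
      rw [hdotshift _ (g p.1), hug p.1] at hk0
      rw [mul_zero, add_zero] at hk0
      linarith

lemma blk_zero_eq {d : ℕ} : blk (0 : Matrix (Fin d) (Fin d) ℝ) 0 0 = 0 := by
  ext p q
  cases p <;> cases q <;> simp [blk_ll, blk_lr, blk_rl, blk_rr]

lemma psd_vecMulVec {d : ℕ} (w : Fin d → ℝ) : (vecMulVec w w).PosSemidef :=
  posSemidef_mk (by ext i j; simp [transpose_apply, vecMulVec_apply, mul_comm])
    (fun y => by rw [quad_vecMulVec]; exact sq_nonneg _)

lemma quad_corner {d : ℕ} (A : Matrix (Fin d ⊕ Unit) (Fin d ⊕ Unit) ℝ) :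
    (Sum.elim (fun _ : Fin d => (0:ℝ)) (fun _ => 1)) ⬝ᵥ
      A *ᵥ (Sum.elim (fun _ : Fin d => (0:ℝ)) (fun _ => 1)) = A (Sum.inr ()) (Sum.inr ()) := by
  simp [dotProduct, mulVec, Fintype.sum_sum_type]

lemma lfeas_value_nonneg {d J : ℕ} {x : Fin J → Fin d → ℝ} {μhat : Fin d → ℝ}
    {Shat : Matrix (Fin d) (Fin d) ℝ} {ρ : ℝ} {μ : Fin d → ℝ}
    {S C M : Matrix (Fin d) (Fin d) ℝ} {lam : Fin J → ℝ} {z : Fin J → Fin d → ℝ}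
    {Z : Fin J → Matrix (Fin d) (Fin d) ℝ}
    (h : LFeas x μhat Shat ρ μ S C M lam z Z) : 0 ≤ 1 - ∑ j, lam j := by
  obtain ⟨-, -, -, -, h5, -, -, -⟩ := h
  have hq := psd_quad h5 (Sum.elim (fun _ : Fin d => (0:ℝ)) (fun _ => 1))
  rw [quad_corner] at hq
  simpa [Matrix.sub_apply, Matrix.sum_apply, blk_rr] using hq

lemma lfeas_exists {d J : ℕ} (x : Fin J → Fin d → ℝ) {ρ : ℝ} (μhat : Fin d → ℝ)
    (Shat : Matrix (Fin d) (Fin d) ℝ) (hShat : Shat.PosDef)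
    {j₀ : Fin J} (hj : x j₀ ⬝ᵥ μhat < 0) :
    ∃ (μ : Fin d → ℝ) (S C M : Matrix (Fin d) (Fin d) ℝ)
      (lam : Fin J → ℝ) (z : Fin J → Fin d → ℝ) (Z : Fin J → Matrix (Fin d) (Fin d) ℝ),
      LFeas x μhat Shat ρ μ S C M lam z Z ∧ ∑ j, lam j = 1 := by
  classical
  have hpsd : Shat.PosSemidef := hShat.posSemidef
  have hsymS : Shatᵀ = Shat := conjTranspose_eq_transpose_of_trivial Shat ▸ hpsd.1
  set V : Matrix (Fin d) (Fin d) ℝ := vecMulVec μhat μhat with hV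
  set M : Matrix (Fin d) (Fin d) ℝ := Shat + V with hM
  refine ⟨μhat, Shat, Shat, M,
    (fun j => if j = j₀ then 1 else 0),
    (fun j => if j = j₀ then μhat else 0),
    (fun j => if j = j₀ then V else 0), ?_, ?_⟩
  · refine ⟨hpsd, hpsd.add (psd_vecMulVec μhat), ?_, ?_, ?_, ?_, ?_, ?_⟩
    · intro j
      by_cases h : j = j₀
      · simp only [h, if_true]
        rw [Matrix.IsSymm]
        ext i j'
        simp [hV, transpose_apply, vecMulVec_apply, mul_comm]
      · simp only [h, if_false]
        exact Matrix.isSymm_zero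
    · intro j
      by_cases h : j = j₀
      · simp only [h, if_true]
        exact ⟨by linarith, psd_blk_rankone μhat⟩
      · simp only [h, if_false]
        refine ⟨by simp, ?_⟩
        rw [blk_zero_eq]
        exact Matrix.PosSemidef.zero
    · have hfun : ∀ jj : Fin J, blk (if jj = j₀ then V else 0) (if jj = j₀ then μhat else 0)
          (if jj = j₀ then (1:ℝ) else 0) = if jj = j₀ then blk V μhat 1 else 0 := by
        intro jj
        by_cases h : jj = j₀
        · simp [h]
        · simp [h, blk_zero_eq]
      have hsum : (∑ j, blk (if j = j₀ then V else 0) (if j = j₀ then μhat else 0)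
          (if j = j₀ then (1:ℝ) else 0)) = blk V μhat 1 := by
        rw [Finset.sum_congr rfl fun jj _ => hfun jj, Finset.sum_ite_eq']
        simp
      rw [hsum]
      have hdiff : blk M μhat 1 - blk V μhat 1 = blk Shat 0 0 := by
        ext p q
        cases p <;> cases q <;>
          simp [blk_ll, blk_lr, blk_rl, blk_rr, Matrix.sub_apply, hM, Matrix.add_apply]
      rw [hdiff]
      exact psd_blk_corner hpsd
    · show (blk2 Shat Shat Shatᵀ Shat).PosSemidef
      rw [blk2, hsymS]
      exact psd_blk2_ones hpsd
    · have : M - Shat = V := by rw [hM]; ext i j; simp [Matrix.sub_apply, Matrix.add_apply]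
      rw [this]
      exact psd_blk_rankone μhat
    · have htr : (M + Shat - (2:ℝ) • Shat).trace = ∑ i, μhat i ^ 2 := by
        simp only [Matrix.trace, Matrix.diag_apply, Matrix.add_apply, Matrix.sub_apply,
          Matrix.smul_apply, smul_eq_mul, hM, hV, vecMulVec_apply]
        exact Finset.sum_congr rfl fun i _ => by ring
      rw [htr]
      have hdot : μhat ⬝ᵥ μhat = ∑ i, μhat i ^ 2 := by
        simp only [dotProduct]
        exact Finset.sum_congr rfl fun i _ => by ring
      rw [hdot]
      have : (∑ i, μhat i ^ 2) - 2 * (∑ i, μhat i ^ 2) + (∑ i, μhat i ^ 2) = 0 := by ring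
      rw [this]
      positivity
  · simp [Finset.sum_ite_eq']

end Helpers


/-- **Proposition 1 (ii).** If `μ̂ ∉ Θ({x_j})`, then the worst-case lower bound on the
probability of validity is trivial: the infimum equals `0`, and consequently the
semidefinite-programming lower bound `L⋆` equals `0`. -/
theorem lower_bound_trivial {d J : ℕ} (hd : 1 ≤ d) (hJ : 1 ≤ J)
    (x : Fin J → Fin d → ℝ) (ρ : ℝ) (hρ : 0 ≤ ρ) (μhat : Fin d → ℝ)
    (Shat : Matrix (Fin d) (Fin d) ℝ) (hShat : Shat.PosDef)
    (hμ : μhat ∉ favSet x) :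
    sInf { p | ∃ Q : Measure (Fin d → ℝ), inAmbiguity μhat Shat ρ Q ∧
        p = (Q (favSet x)).toReal } = 0 ∧
    Lstar x μhat Shat ρ = 0 := by
  classical
  have hμ' : ∃ j, ¬ (0 ≤ x j ⬝ᵥ μhat) := by
    by_contra h
    push_neg at h
    exact hμ h
  obtain ⟨j₀, hj₀⟩ := hμ'
  push_neg at hj₀
  obtain ⟨Q, hQ, hQ0⟩ := exists_good_measure hd x hρ μhat Shat hShat hj₀
  constructor
  · have h0 : (0:ℝ) ∈ { p | ∃ Q : Measure (Fin d → ℝ), inAmbiguity μhat Shat ρ Q ∧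
        p = (Q (favSet x)).toReal } := ⟨Q, hQ, by rw [hQ0]; simp⟩
    have hlb : ∀ p ∈ { p | ∃ Q : Measure (Fin d → ℝ), inAmbiguity μhat Shat ρ Q ∧
        p = (Q (favSet x)).toReal }, (0:ℝ) ≤ p := by
      rintro p ⟨Q', -, rfl⟩
      exact ENNReal.toReal_nonneg
    exact le_antisymm (csInf_le ⟨0, hlb⟩ h0) (le_csInf ⟨0, h0⟩ hlb)
  · obtain ⟨μ, S, C, M, lam, z, Z, hfeas, hlam⟩ := lfeas_exists x (ρ := ρ) μhat Shat hShat hj₀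
    rw [Lstar]
    have h0 : (0:ℝ) ∈ { v | ∃ (μ : Fin d → ℝ) (S C M : Matrix (Fin d) (Fin d) ℝ)
        (lam : Fin J → ℝ) (z : Fin J → Fin d → ℝ) (Z : Fin J → Matrix (Fin d) (Fin d) ℝ),
        LFeas x μhat Shat ρ μ S C M lam z Z ∧ v = 1 - ∑ j, lam j } :=
      ⟨μ, S, C, M, lam, z, Z, hfeas, by rw [hlam]; ring⟩
    have hlb : ∀ v ∈ { v | ∃ (μ : Fin d → ℝ) (S C M : Matrix (Fin d) (Fin d) ℝ)
        (lam : Fin J → ℝ) (z : Fin J → Fin d → ℝ) (Z : Fin J → Matrix (Fin d) (Fin d) ℝ),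
        LFeas x μhat Shat ρ μ S C M lam z Z ∧ v = 1 - ∑ j, lam j }, (0:ℝ) ≤ v := by
      rintro v ⟨μ', S', C', M', lam', z', Z', hf, rfl⟩
      exact lfeas_value_nonneg hf
    exact le_antisymm (csInf_le ⟨0, hlb⟩ h0) (le_csInf ⟨0, h0⟩ hlb)

end
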